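/- arXiv:1005.4588 — 2 statements merged into one kernel-verified Lean document; each statement's English description precedes it below -/
import Mathlib

section
/- Let n ≥ 3, λ = 2·cot(π/n), T = [[1, λ],[0, 1]] and R the rotation matrix by π/n. Then (T⁻¹·R²)² = R⁻¹·T²·R. -/
open Real Matrix

theorem stmt_3 (n : ℕ) (hn : 3 ≤ n)
    (lam : ℝ) (hlam : lam = 2 * Real.cot (π / n))
    (T R : Matrix (Fin 2) (Fin 2) ℝ)
    (hT : T = !![1, lam; 0, 1])
    (hR : R = !![Real.cos (π / n), -Real.sin (π / n);
                 Real.sin (π / n),  Real.cos (π / n)]) :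
    (T⁻¹ * R ^ 2) ^ 2 = R⁻¹ * T ^ 2 * R := by
  set s := Real.sin (π / n) with hs
  set c := Real.cos (π / n) with hc
  have hn0 : (0:ℝ) < n := by positivity
  have h3 : (3:ℝ) ≤ n := by exact_mod_cast hn
  have hspos : 0 < s := by
    apply Real.sin_pos_of_pos_of_lt_pi
    · positivity
    · rw [div_lt_iff₀ hn0]
      nlinarith [Real.pi_pos]
  have hsne : s ≠ 0 := ne_of_gt hspos
  have hpy : c ^ 2 + s ^ 2 = 1 := by
    rw [hs, hc, add_comm]; exact Real.sin_sq_add_cos_sq _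
  have hlam' : lam * s = 2 * c := by
    rw [hlam, Real.cot_eq_cos_div_sin]
    field_simp
    rw [← hs, ← hc, mul_div_assoc, div_self hsne, mul_one]
  have hTinv : T⁻¹ = !![1, -lam; 0, 1] := by
    rw [Matrix.inv_eq_left_inv]
    rw [hT]
    ext i j
    fin_cases i <;> fin_cases j <;>
      simp [Matrix.mul_apply, Fin.sum_univ_succ] <;> ring
  have hRinv : R⁻¹ = !![c, s; -s, c] := by
    rw [Matrix.inv_eq_left_inv]
    rw [hR]
    ext i j
    fin_cases i <;> fin_cases j <;>
      simp [Matrix.mul_apply, Fin.sum_univ_succ] <;> first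
        | linear_combination hpy
        | linear_combination 2*hpy
        | linear_combination -hpy
        | ring1
  rw [hTinv, hRinv, hT, hR, pow_two, pow_two, pow_two]
  ext i j
  fin_cases i <;> fin_cases j <;>
    simp [Matrix.mul_apply, Fin.sum_univ_succ]
  · linear_combination ((1:ℝ)*s*s + (5:ℝ)*c*c) * hpy + ((-2:ℝ)*c + (6:ℝ)*c*s*s + (4:ℝ)*c*c*s*lam + (2:ℝ)*c*c*c) * hlam'
  · linear_combination ((2:ℝ)*c*c*lam) * hpy + ((-2:ℝ)*s*s*s + (-2:ℝ)*c*s*s*lam + (2:ℝ)*c*c*s + (2:ℝ)*c*c*c*lam) * hlam'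
  · linear_combination ((-4:ℝ)*c*s) * hpy + ((2:ℝ)*s + (-4:ℝ)*c*c*s) * hlam'
  · linear_combination ((1:ℝ)*s*s + (-3:ℝ)*c*c) * hpy + ((2:ℝ)*c + (2:ℝ)*c*s*s + (-2:ℝ)*c*c*c) * hlam'
end

section
/- Let F be the free group on generators R, T and let U ≤ F be the subgroup generated by {Rⁿ, T, R·T·R^{-(n-1)}, R²·T·R^{-(n-2)}, ..., R^{n-1}·T·R^{-1}} for n ≥ 2. Then U has index n in F and {1, R, R², ..., R^{n-1}} is a complete set of right coset representatives for U in F. -/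
open FreeGroup

theorem stmt_19 (n : ℕ) (hn : 2 ≤ n)
    (R T : FreeGroup Bool) (hR : R = FreeGroup.of true) (hT : T = FreeGroup.of false)
    (U : Subgroup (FreeGroup Bool))
    (hU : U = Subgroup.closure
      ({R ^ n, T} ∪ {x | ∃ j : ℕ, 1 ≤ j ∧ j < n ∧ x = R ^ j * T * (R ^ (n - j))⁻¹})) :
    U.index = n ∧
      ∀ g : FreeGroup Bool, ∃! j : Fin n, ∃ u ∈ U, g = u * R ^ (j : ℕ) := by
  haveI : NeZero n := ⟨by omega⟩
  haveI : Fact (1 < n) := ⟨by omega⟩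
  -- the permutation representation encoding the right action on cosets
  set φ : FreeGroup Bool →* Equiv.Perm (ZMod n) :=
    FreeGroup.lift (fun b => if b then Equiv.addRight (-1 : ZMod n) else Equiv.neg (ZMod n))
    with hφ
  have hφR : φ R = Equiv.addRight (-1 : ZMod n) := by simp [hφ, hR]
  have hφT : φ T = Equiv.neg (ZMod n) := by simp [hφ, hT]
  have hφRpow : ∀ (m : ℕ) (j : ZMod n), φ (R ^ m) j = j - m := by
    intro m
    induction m with
    | zero => intro j; simp
    | succ k ih =>
      intro j
      rw [pow_succ, _root_.map_mul, Equiv.Perm.mul_apply, hφR]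
      simp only [Equiv.coe_addRight]
      rw [ih]
      push_cast; ring
  have hφRpowInv : ∀ (m : ℕ) (j : ZMod n), (φ (R ^ m))⁻¹ j = j + m := by
    intro m j
    rw [Equiv.Perm.inv_eq_iff_eq, hφRpow]
    ring
  -- membership of the generators
  have hRn : R ^ n ∈ U := by
    rw [hU]; exact Subgroup.subset_closure (Or.inl (Or.inl rfl))
  have hTU : T ∈ U := by
    rw [hU]; exact Subgroup.subset_closure (Or.inl (Or.inr rfl))
  have hgj : ∀ j : ℕ, 1 ≤ j → j < n → R ^ j * T * (R ^ (n - j))⁻¹ ∈ U := by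
    intro j h1 h2
    rw [hU]; exact Subgroup.subset_closure (Or.inr ⟨j, h1, h2, rfl⟩)
  -- every element of U stabilizes 0
  have stab : ∀ u ∈ U, φ u 0 = 0 := by
    have : U ≤ Subgroup.comap φ (MulAction.stabilizer (Equiv.Perm (ZMod n)) (0 : ZMod n)) := by
      rw [hU, Subgroup.closure_le]
      intro x hx
      simp only [Set.mem_union, Set.mem_insert_iff, Set.mem_singleton_iff,
        Set.mem_setOf_eq] at hx
      rcases hx with (hx | hx) | ⟨j, hj1, hj2, hx⟩ <;> rw [hx]
      · show φ (R ^ n) 0 = 0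
        rw [hφRpow]; simp
      · show φ T 0 = 0
        rw [hφT]; simp
      · show φ (R ^ j * T * (R ^ (n - j))⁻¹) 0 = 0
        rw [_root_.map_mul, _root_.map_mul, _root_.map_inv, Equiv.Perm.mul_apply, Equiv.Perm.mul_apply,
          hφRpowInv, hφT, hφRpow]
        simp only [Equiv.neg_apply, zero_add]
        have : ((n - j : ℕ) : ZMod n) = -(j : ZMod n) := by
          have : ((n - j : ℕ) : ZMod n) + (j : ZMod n) = 0 := by
            rw [← Nat.cast_add, Nat.sub_add_cancel (le_of_lt hj2)]
            simp
          linear_combination this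
        rw [this]
        ring
    intro u hu
    have := this hu
    simpa [Subgroup.mem_comap, MulAction.mem_stabilizer_iff] using this
  have stabInv : ∀ u ∈ U, (φ u)⁻¹ 0 = 0 := by
    intro u hu
    rw [Equiv.Perm.inv_eq_iff_eq, stab u hu]
  -- the key Schreier-type lemma
  have key : ∀ g : FreeGroup Bool, ∀ j : ZMod n,
      R ^ j.val * g * (R ^ (((φ g)⁻¹ j).val))⁻¹ ∈ U := by
    intro g
    induction g using FreeGroup.induction_on with
    | C1 => intro j; simpa using one_mem U
    | of x =>
      intro j
      cases x with
      | true =>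
        have hpure : (FreeGroup.of true : FreeGroup Bool) = R := hR.symm
        rw [hpure]
        have hInv : (φ R)⁻¹ j = j + 1 := by
          have := hφRpowInv 1 j
          simpa using this
        rw [hInv]
        have hval : (j + 1).val = (j.val + 1) % n := by
          rw [ZMod.val_add, ZMod.val_one]
        have hjlt : j.val < n := ZMod.val_lt j
        rcases Nat.lt_or_ge (j.val + 1) n with h | h
        · have : (j + 1).val = j.val + 1 := by rw [hval, Nat.mod_eq_of_lt h]
          rw [this]
          have : R ^ j.val * R * (R ^ (j.val + 1))⁻¹ = 1 := by
            rw [pow_succ]; group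
          rw [this]; exact one_mem U
        · have hn1 : j.val + 1 = n := by omega
          have : (j + 1).val = 0 := by rw [hval, hn1, Nat.mod_self]
          rw [this]
          have heq2 : R ^ j.val * R * (R ^ 0)⁻¹ = R ^ (j.val + 1) := by
            rw [pow_succ]; group
          rw [heq2, hn1]; exact hRn
      | false =>
        have hpure : (FreeGroup.of false : FreeGroup Bool) = T := hT.symm
        rw [hpure]
        have hInv : (φ T)⁻¹ j = -j := by
          rw [Equiv.Perm.inv_eq_iff_eq, hφT]
          simp
        rw [hInv]
        by_cases hj : j = 0
        · subst hj
          simp only [neg_zero, ZMod.val_zero, pow_zero, one_mul, inv_one, mul_one]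
          exact hTU
        · have hneg : (-j).val = n - j.val := by
            rw [ZMod.neg_val]; simp [hj]
          rw [hneg]
          have h1 : 1 ≤ j.val := by
            rcases Nat.eq_zero_or_pos j.val with h | h
            · exact absurd ((ZMod.val_eq_zero j).mp h) hj
            · exact h
          exact hgj j.val h1 (ZMod.val_lt j)
    | inv_of x hx =>
      intro j
      have h1 := hx (φ (FreeGroup.of x) j)
      have hInvInv : (φ (FreeGroup.of x))⁻¹ (φ (FreeGroup.of x) j) = j := Equiv.symm_apply_apply _ _
      rw [hInvInv] at h1
      have h2 := U.inv_mem h1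
      have heq : (R ^ ((φ (FreeGroup.of x)) j).val * FreeGroup.of x * (R ^ j.val)⁻¹)⁻¹
          = R ^ j.val * (FreeGroup.of x)⁻¹ * (R ^ ((φ (FreeGroup.of x)) j).val)⁻¹ := by group
      rw [heq] at h2
      have hgoal : (φ (FreeGroup.of x)⁻¹)⁻¹ j = (φ (FreeGroup.of x)) j := by
        rw [_root_.map_inv, inv_inv]
      rw [hgoal]
      exact h2
    | mul g h hg hh =>
      intro j
      have hk := hg j
      have hl := hh ((φ g)⁻¹ j)
      have hmem := U.mul_mem hk hl
      have hexp : (φ (g * h))⁻¹ j = (φ h)⁻¹ ((φ g)⁻¹ j) := by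
        rw [_root_.map_mul, mul_inv_rev, Equiv.Perm.mul_apply]
      rw [hexp]
      have heq : (R ^ j.val * g * (R ^ ((φ g)⁻¹ j).val)⁻¹) *
          (R ^ ((φ g)⁻¹ j).val * h * (R ^ ((φ h)⁻¹ ((φ g)⁻¹ j)).val)⁻¹)
          = R ^ j.val * (g * h) * (R ^ ((φ h)⁻¹ ((φ g)⁻¹ j)).val)⁻¹ := by group
      rw [heq] at hmem
      exact hmem
  -- the coset-label function
  have exist : ∀ g : FreeGroup Bool, ∃ u ∈ U, g = u * R ^ (((φ g)⁻¹ 0).val) := by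
    intro g
    have := key g 0
    rw [ZMod.val_zero, pow_zero, one_mul] at this
    exact ⟨g * (R ^ (((φ g)⁻¹ 0).val))⁻¹, this, by group⟩
  have uniq : ∀ g : FreeGroup Bool, ∀ j : ℕ, j < n → (∃ u ∈ U, g = u * R ^ j) →
      (j : ZMod n) = (φ g)⁻¹ 0 := by
    rintro g j hj ⟨u, hu, rfl⟩
    rw [_root_.map_mul, mul_inv_rev, Equiv.Perm.mul_apply, stabInv u hu, hφRpowInv, zero_add]
  -- the second part of the statement
  have part2 : ∀ g : FreeGroup Bool, ∃! j : Fin n, ∃ u ∈ U, g = u * R ^ (j : ℕ) := by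
    intro g
    refine ⟨⟨((φ g)⁻¹ 0).val, ZMod.val_lt _⟩, exist g, ?_⟩
    rintro ⟨j, hjlt⟩ hja
    have := uniq g j hjlt hja
    have hval : j = ((φ g)⁻¹ 0).val := by
      rw [← this, ZMod.val_cast_of_lt hjlt]
    exact Fin.ext hval
  refine ⟨?_, part2⟩
  -- index computation
  let e : Fin n → FreeGroup Bool ⧸ U := fun j => QuotientGroup.mk (R ^ (j : ℕ))⁻¹
  have hbij : Function.Bijective e := by
    constructor
    · intro j k hjk
      have h : ((R ^ (j : ℕ))⁻¹)⁻¹ * (R ^ (k : ℕ))⁻¹ ∈ U := QuotientGroup.eq.mp hjk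
      have hj : ∃ u ∈ U, R ^ (j : ℕ) = u * R ^ (k : ℕ) := by
        refine ⟨R ^ (j : ℕ) * (R ^ (k : ℕ))⁻¹, by simpa using h, by group⟩
      have hj' : ∃ u ∈ U, R ^ (j : ℕ) = u * R ^ (j : ℕ) := ⟨1, one_mem U, by group⟩
      have h1 := (part2 (R ^ (j : ℕ))).unique hj' hj
      exact h1.symm ▸ rfl
    · intro q
      induction q using QuotientGroup.induction_on with
      | H g =>
        obtain ⟨u, hu, hgu⟩ := exist g⁻¹
        set m : ℕ := ((φ g⁻¹)⁻¹ 0).val with hm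
        refine ⟨⟨m, ZMod.val_lt _⟩, ?_⟩
        show QuotientGroup.mk (R ^ m)⁻¹ = QuotientGroup.mk g
        rw [QuotientGroup.eq]
        have hg : g = (u * R ^ m)⁻¹ := by rw [← hgu, inv_inv]
        have key2 : ((R ^ m)⁻¹)⁻¹ * g = u⁻¹ := by
          rw [hg]; group
        rw [key2]
        exact U.inv_mem hu
  have : Nat.card (FreeGroup Bool ⧸ U) = n := by
    rw [Nat.card_congr (Equiv.ofBijective e hbij).symm]
    simp
  exact this
end
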